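/- Let G be a topological group acting continuously on a topological space X. If the action satisfies property (b): for every x ∈ X and open neighborhood O of the identity, x ∈ interior(closure(O·x)), then for every x ∈ X and every y ∈ closure(G·x), we have closure(G·y) = closure(G·x). -/

import Mathlib

open Pointwise

private lemma orbit_subset_closure_orbit {G X : Type*} [Group G] [TopologicalSpace X]
    [MulAction G X] [TopologicalSpace G] [ContinuousSMul G X]
    {w z : X} (hz : z ∈ closure (MulAction.orbit G w)) :
    MulAction.orbit G z ⊆ closure (MulAction.orbit G w) := by
  rintro _ ⟨g, rfl⟩
  have h1 : g • z ∈ g • closure (MulAction.orbit G w) := Set.smul_mem_smul_set hz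
  rwa [← closure_smul, MulAction.smul_orbit] at h1

theorem stmt18 {G X : Type*} [Group G] [TopologicalSpace G] [IsTopologicalGroup G]
    [TopologicalSpace X] [MulAction G X] [ContinuousSMul G X]
    (hb : ∀ (x : X) (O : Set G), IsOpen O → (1 : G) ∈ O →
      x ∈ interior (closure ((fun g => g • x) '' O)))
    (x y : X) (hy : y ∈ closure (MulAction.orbit G x)) :
    closure (MulAction.orbit G y) = closure (MulAction.orbit G x) := by
  have himg : (fun g : G => g • y) '' Set.univ = MulAction.orbit G y := by
    ext z; simp [MulAction.orbit, Set.range, Set.image]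
  have hyW : y ∈ interior (closure (MulAction.orbit G y)) := by
    have := hb y Set.univ isOpen_univ (Set.mem_univ 1)
    rwa [himg] at this
  -- orbit x meets the open set W := interior (closure (orbit y))
  obtain ⟨z, hzW, hz⟩ := mem_closure_iff.mp hy _ isOpen_interior hyW
  obtain ⟨g, rfl⟩ := hz
  have hgx : g • x ∈ closure (MulAction.orbit G y) := interior_subset hzW
  have hx : x ∈ closure (MulAction.orbit G y) := by
    have := orbit_subset_closure_orbit (w := y) hgx ⟨g⁻¹, rfl⟩
    simpa using this
  apply Set.Subset.antisymm
  · exact closure_minimal (orbit_subset_closure_orbit hy) isClosed_closure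
  · exact closure_minimal (orbit_subset_closure_orbit hx) isClosed_closure
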